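/- Let (M, 𝒜, μ) be a finite measure space, X = L²(μ) the real Hilbert space with inner product ⟪f,g⟫ = ∫ f·g dμ, and J : X → ℝ translation invariant. Suppose C ⊆ M is measurable with μ(M \ C) > 0, λ ≠ 0, and C is an eigenset of J with eigenvalue λ and ratio β > 0. Then β = μ(C)/μ(M \ C). (Claim: the ratio of an eigenset's indicator eigenfunction equals the ratio of the areas of the set and its complement.) -/

import Mathlib

open MeasureTheory RealInnerProductSpace

/-- `p` is a subgradient of `J` at `u`. -/
def IsSubgradientAt {X : Type*} [NormedAddCommGroup X] [InnerProductSpace ℝ X]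
    (J : X → ℝ) (p u : X) : Prop :=
  ∀ v : X, J v ≥ J u + ⟪p, v - u⟫

/-- The indicator function of a measurable set as an element of `L²(μ)`. -/
noncomputable def chi {M : Type*} [MeasurableSpace M] (μ : Measure M) [IsFiniteMeasure μ]
    {C : Set M} (hC : MeasurableSet C) : Lp ℝ 2 μ :=
  indicatorConstLp 2 hC (measure_ne_top μ C) (1 : ℝ)

/-- `C` is an eigenset of `J` with eigenvalue `lam` and ratio `β > 0`:
`ψ := χ_C − β • χ_{M \ C}` satisfies that `lam • ψ` is a subgradient of `J` at `ψ`. -/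
def IsEigenset {M : Type*} [MeasurableSpace M] (μ : Measure M) [IsFiniteMeasure μ]
    (J : Lp ℝ 2 μ → ℝ) {C : Set M} (hC : MeasurableSet C) (lam β : ℝ) : Prop :=
  0 < β ∧ IsSubgradientAt J
    (lam • (chi μ hC - β • chi μ hC.compl)) (chi μ hC - β • chi μ hC.compl)

lemma chi_inner_one {M : Type*} [MeasurableSpace M] (μ : Measure M) [IsFiniteMeasure μ]
    {C : Set M} (hC : MeasurableSet C) :
    ⟪chi μ hC, chi μ (MeasurableSet.univ : MeasurableSet (Set.univ : Set M))⟫ =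
      (μ C).toReal := by
  rw [chi, L2.inner_indicatorConstLp_one]
  have h : (chi μ (MeasurableSet.univ : MeasurableSet (Set.univ : Set M)) : M → ℝ)
      =ᵐ[μ] fun _ => (1 : ℝ) := by
    filter_upwards [indicatorConstLp_coeFn (p := 2)
      (hs := (MeasurableSet.univ : MeasurableSet (Set.univ : Set M)))
      (hμs := measure_ne_top μ Set.univ) (c := (1 : ℝ))] with x hx
    rw [chi] at *; rw [hx]; simp
  rw [setIntegral_congr_ae hC (h.mono fun x hx _ => hx)]
  simp [setIntegral_const]
  rfl

/-- The ratio of an eigenset's indicator eigenfunction equals the ratio of the areas of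
the set and its complement: `β = μ(C)/μ(M \ C)`. -/
theorem eigenset_ratio_eq_area_ratio
    {M : Type*} [MeasurableSpace M] (μ : Measure M) [IsFiniteMeasure μ]
    (J : Lp ℝ 2 μ → ℝ)
    (htrans : ∀ (u : Lp ℝ 2 μ) (c : ℝ),
      J (u + c • chi μ (MeasurableSet.univ : MeasurableSet (Set.univ : Set M))) = J u)
    {C : Set M} (hC : MeasurableSet C) (hCcpos : 0 < μ Cᶜ)
    (lam β : ℝ) (hlam : lam ≠ 0)
    (heig : IsEigenset μ J hC lam β) :
    β = (μ C).toReal / (μ Cᶜ).toReal := by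
  set one := chi μ (MeasurableSet.univ : MeasurableSet (Set.univ : Set M)) with hone
  set ψ := chi μ hC - β • chi μ hC.compl with hψ
  obtain ⟨hβ, hsub⟩ := heig
  -- from the subgradient inequality and translation invariance:
  have key : ∀ c : ℝ, c * ⟪lam • ψ, one⟫ ≤ 0 := by
    intro c
    have h := hsub (ψ + c • one)
    rw [htrans ψ c] at h
    have : ⟪lam • ψ, ψ + c • one - ψ⟫ ≤ 0 := by linarith
    simpa [add_sub_cancel_left, inner_smul_right, mul_comm] using this
  have hzero : ⟪lam • ψ, one⟫ = 0 := le_antisymm (by simpa using key 1) (by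
    have := key (-1); linarith)
  have hψone : ⟪ψ, one⟫ = 0 := by
    rw [real_inner_smul_left] at hzero
    exact (mul_eq_zero.mp hzero).resolve_left hlam
  have hcomp : ⟪ψ, one⟫ = (μ C).toReal - β * (μ Cᶜ).toReal := by
    rw [hψ, inner_sub_left, real_inner_smul_left, chi_inner_one, chi_inner_one]
  have hCc : (0 : ℝ) < (μ Cᶜ).toReal :=
    ENNReal.toReal_pos hCcpos.ne' (measure_ne_top μ _)
  have : (μ C).toReal - β * (μ Cᶜ).toReal = 0 := by rw [← hcomp, hψone]
  field_simp
  linarith
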